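/- Let E be a real normed vector space, Θ ⊆ E a nonempty closed convex set, and f₁, …, f_N : E → ℝ functions each of which is CSN with smoothness β > 0. Let θ₁, …, θ_N ∈ Θ, let ε̂ = (1/N) inf_{θ ∈ Θ} Σ_{n=1}^N f_n(θ), and let Ê ≥ ε̂. Define the linearized regret Regret(⟨f_n′(θ_n), ·⟩) := Σ_{n=1}^N f_n′(θ_n)(θ_n) − inf_{θ ∈ Θ} Σ_{n=1}^N f_n′(θ_n)(θ). Let R > 0 and K > 0, and assume that for every η > 0, Regret(f_n) ≤ Regret(⟨f_n′(θ_n), ·⟩) and Regret(⟨f_n′(θ_n), ·⟩) ≤ K(R²/η + (η/2) Σ_{n=1}^N ‖f_n′(θ_n)‖²). Then Regret(⟨f_n′(θ_n), ·⟩) ≤ 8K²βR² + √(8K²βR²NÊ). -/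

import Mathlib

open Finset

lemma descent_lemma {E : Type*} [NormedAddCommGroup E] [NormedSpace ℝ E]
    {f : E → ℝ} {β : ℝ}
    (hd : Differentiable ℝ f)
    (hL : ∀ x y, ‖fderiv ℝ f x - fderiv ℝ f y‖ ≤ β * ‖x - y‖)
    (x v : E) : f (x + v) ≤ f x + fderiv ℝ f x v + β / 2 * ‖v‖ ^ 2 := by
  set c := fderiv ℝ f x v with hc
  set g : ℝ → ℝ := fun t => f (x + t • v) - t * c - β / 2 * ‖v‖ ^ 2 * t ^ 2 with hg
  have hderiv : ∀ t : ℝ, HasDerivAt g (fderiv ℝ f (x + t • v) v - c - β * ‖v‖ ^ 2 * t) t := by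
    intro t
    have h1 : HasDerivAt (fun t : ℝ => x + t • v) v t := by
      simpa using ((hasDerivAt_id t).smul_const v).const_add x
    have h2 : HasDerivAt (fun t : ℝ => f (x + t • v)) (fderiv ℝ f (x + t • v) v) t := by
      exact ((hd (x + t • v)).hasFDerivAt.comp_hasDerivAt t h1)
    have h3 : HasDerivAt (fun t : ℝ => t * c) c t := by
      simpa using (hasDerivAt_id t).mul_const c
    have h4 : HasDerivAt (fun t : ℝ => β / 2 * ‖v‖ ^ 2 * t ^ 2)
        (β / 2 * ‖v‖ ^ 2 * (2 * t)) t := by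
      simpa using (hasDerivAt_pow 2 t).const_mul (β / 2 * ‖v‖ ^ 2)
    have h5 := (h2.sub h3).sub h4
    convert h5 using 1
    all_goals try rfl
    ring
  have hanti : AntitoneOn g (Set.Icc (0:ℝ) 1) := by
    apply antitoneOn_of_deriv_nonpos (convex_Icc 0 1)
    · exact fun t _ => (hderiv t).continuousAt.continuousWithinAt
    · exact fun t _ => (hderiv t).differentiableAt.differentiableWithinAt
    · intro t ht
      rw [interior_Icc] at ht
      rw [(hderiv t).deriv]
      have h6 : ‖fderiv ℝ f (x + t • v) - fderiv ℝ f x‖ ≤ β * ‖x + t • v - x‖ := hL _ _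
      have h7 : ‖x + t • v - x‖ = |t| * ‖v‖ := by simp [norm_smul]
      rw [h7, abs_of_pos ht.1] at h6
      have h8 : (fderiv ℝ f (x + t • v)) v - (fderiv ℝ f x) v
          ≤ ‖(fderiv ℝ f (x + t • v) - fderiv ℝ f x) v‖ := by
        rw [ContinuousLinearMap.sub_apply]; exact le_abs_self _
      have h9 := ContinuousLinearMap.le_opNorm (fderiv ℝ f (x + t • v) - fderiv ℝ f x) v
      have h10 := mul_le_mul_of_nonneg_right h6 (norm_nonneg v)
      have h11 : β * (t * ‖v‖) * ‖v‖ = β * ‖v‖ ^ 2 * t := by ring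
      rw [hc]
      linarith
  have hkey := hanti (Set.mem_Icc.2 ⟨le_refl 0, zero_le_one⟩)
      (Set.mem_Icc.2 ⟨zero_le_one, le_refl 1⟩) zero_le_one
  simp only [hg, one_smul, zero_smul, add_zero, one_mul, zero_mul, one_pow, mul_one,
    sub_zero, mul_zero] at hkey
  linarith

lemma grad_sq_le {E : Type*} [NormedAddCommGroup E] [NormedSpace ℝ E]
    {f : E → ℝ} {β : ℝ} (hβ : 0 < β)
    (hnn : ∀ x, 0 ≤ f x) (hd : Differentiable ℝ f)
    (hL : ∀ x y, ‖fderiv ℝ f x - fderiv ℝ f y‖ ≤ β * ‖x - y‖)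
    (x : E) : ‖fderiv ℝ f x‖ ^ 2 ≤ 2 * β * f x := by
  set L := fderiv ℝ f x with hLdef
  have hbound : ∀ t : ℝ, 0 < t → ‖L‖ ≤ f x / t + β * t / 2 := by
    intro t ht
    apply ContinuousLinearMap.opNorm_le_bound
    · exact add_nonneg (div_nonneg (hnn x) ht.le) (by positivity)
    · intro v
      rcases eq_or_ne v 0 with rfl | hv
      · simp
      have hvn : (0:ℝ) < ‖v‖ := norm_pos_iff.2 hv
      set D := f x + β / 2 * t ^ 2 with hD
      have hw : ∀ w : E, ‖w‖ = t → L w ≥ -D := by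
        intro w hwt
        have h1 := descent_lemma hd hL x w
        have h0 := hnn (x + w)
        rw [hwt] at h1
        rw [hD]; linarith
      set a : ℝ := t / ‖v‖ with ha'
      have ha : 0 < a := by positivity
      have hn1 : ‖a • v‖ = t := by
        rw [norm_smul, Real.norm_eq_abs, abs_of_pos ha, ha']
        field_simp
      have h1 := hw (a • v) hn1
      have h2 := hw (-(a • v)) (by rw [norm_neg]; exact hn1)
      rw [map_neg] at h2
      rw [map_smul, smul_eq_mul] at h1 h2
      have hDabs : |a * L v| ≤ D := abs_le.2 ⟨by linarith, by linarith⟩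
      rw [abs_mul, abs_of_pos ha] at hDabs
      have hfin : |L v| ≤ D / a := by
        rw [le_div_iff₀ ha]
        linarith [mul_comm a |L v|]
      rw [Real.norm_eq_abs]
      have : D / a = (f x / t + β * t / 2) * ‖v‖ := by
        rw [hD, ha']
        field_simp
      linarith
  rcases eq_or_lt_of_le (norm_nonneg L) with h0 | h0
  · have := hnn x
    nlinarith [h0.symm]
  · have hb := hbound (‖L‖ / β) (by positivity)
    have h3 : f x / (‖L‖ / β) = β * f x / ‖L‖ := by
      field_simp
    have h4 : β * (‖L‖ / β) / 2 = ‖L‖ / 2 := by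
      field_simp
    rw [h3, h4] at hb
    have h5 : ‖L‖ / 2 ≤ β * f x / ‖L‖ := by linarith
    rw [div_le_div_iff₀ (by norm_num) h0] at h5
    nlinarith


/-- A differentiable function `f : E → ℝ` is CSN with smoothness `β` if it is convex,
non-negative, and its Fréchet derivative is `β`-Lipschitz in the operator (dual) norm. -/
def IsCSN {E : Type*} [NormedAddCommGroup E] [NormedSpace ℝ E]
    (f : E → ℝ) (β : ℝ) : Prop :=
  ConvexOn ℝ Set.univ f ∧ (∀ x, 0 ≤ f x) ∧ Differentiable ℝ f ∧
    ∀ x y, ‖fderiv ℝ f x - fderiv ℝ f y‖ ≤ β * ‖x - y‖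

/-- `Regret(f_n) = Σ_{n=1}^N f_n(θ_n) − inf_{θ ∈ Θ} Σ_{n=1}^N f_n(θ)`. -/
noncomputable def regret {E : Type*} (Θ : Set E) (N : ℕ)
    (f : ℕ → E → ℝ) (θ : ℕ → E) : ℝ :=
  (∑ n ∈ Finset.Icc 1 N, f n (θ n))
    - sInf ((fun x => ∑ n ∈ Finset.Icc 1 N, f n x) '' Θ)

/-- `Regret(⟨f_n′(θ_n), ·⟩) = Σ_{n=1}^N f_n′(θ_n)(θ_n) − inf_{θ ∈ Θ} Σ_{n=1}^N f_n′(θ_n)(θ)`. -/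
noncomputable def linRegret {E : Type*} [NormedAddCommGroup E] [NormedSpace ℝ E]
    (Θ : Set E) (N : ℕ) (f : ℕ → E → ℝ) (θ : ℕ → E) : ℝ :=
  (∑ n ∈ Finset.Icc 1 N, fderiv ℝ (f n) (θ n) (θ n))
    - sInf ((fun x => ∑ n ∈ Finset.Icc 1 N, fderiv ℝ (f n) (θ n) x) '' Θ)

set_option maxHeartbeats 1000000 in
/-- Lemma E.3: bias-dependent linearized-regret bound under proper adaptive stepsizes,
encoded as the regret bounds holding for every `η > 0` up to a multiplicative factor `K`. -/
theorem bias_dependent_linearized_regret_adaptive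
    {E : Type*} [NormedAddCommGroup E] [NormedSpace ℝ E]
    (Θ : Set E) (hne : Θ.Nonempty) (hcl : IsClosed Θ) (hcv : Convex ℝ Θ)
    (N : ℕ) (hN : 1 ≤ N)
    (f : ℕ → E → ℝ) (β : ℝ) (hβ : 0 < β)
    (hCSN : ∀ n ∈ Finset.Icc 1 N, IsCSN (f n) β)
    (θ : ℕ → E) (hθ : ∀ n ∈ Finset.Icc 1 N, θ n ∈ Θ)
    (εhat Ehat R K : ℝ)
    (hεhat : εhat = (1 / (N : ℝ)) * sInf ((fun x => ∑ n ∈ Finset.Icc 1 N, f n x) '' Θ))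
    (hEhat : εhat ≤ Ehat)
    (hR : 0 < R) (hK : 0 < K)
    (hreg : ∀ η : ℝ, 0 < η →
        regret Θ N f θ ≤ linRegret Θ N f θ ∧
        linRegret Θ N f θ
          ≤ K * (R ^ 2 / η + (η / 2) * ∑ n ∈ Finset.Icc 1 N, ‖fderiv ℝ (f n) (θ n)‖ ^ 2)) :
    linRegret Θ N f θ ≤ 8 * K ^ 2 * β * R ^ 2
      + Real.sqrt (8 * K ^ 2 * β * R ^ 2 * N * Ehat) := by

  -- notation
  set Lr := linRegret Θ N f θ with hLr
  set I := sInf ((fun x => ∑ n ∈ Finset.Icc 1 N, f n x) '' Θ) with hI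
  have hNpos : (0:ℝ) < N := by exact_mod_cast hN
  -- the infimum is nonnegative
  have hI0 : 0 ≤ I := by
    apply Real.sInf_nonneg
    rintro y ⟨x, hx, rfl⟩
    exact Finset.sum_nonneg fun n hn => (hCSN n hn).2.1 x
  -- I ≤ N * Ehat
  have hINE : I ≤ (N:ℝ) * Ehat := by
    have h1 : (N:ℝ) * εhat = I := by
      rw [hεhat]; field_simp
    have h2 : (N:ℝ) * εhat ≤ (N:ℝ) * Ehat :=
      mul_le_mul_of_nonneg_left hEhat hNpos.le
    linarith
  have hNE0 : 0 ≤ (N:ℝ) * Ehat := le_trans hI0 hINE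
  -- sum of function values bounded by linearized regret plus infimum
  have hsumf : (∑ n ∈ Finset.Icc 1 N, f n (θ n)) ≤ Lr + I := by
    have h1 := (hreg 1 one_pos).1
    rw [regret] at h1
    linarith
  -- gradient-square sum bound
  set S := ∑ n ∈ Finset.Icc 1 N, ‖fderiv ℝ (f n) (θ n)‖ ^ 2 with hSdef
  have hS0 : 0 ≤ S := Finset.sum_nonneg fun n _ => sq_nonneg _
  have hSle : S ≤ 2 * β * ∑ n ∈ Finset.Icc 1 N, f n (θ n) := by
    rw [hSdef, Finset.mul_sum]
    apply Finset.sum_le_sum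
    intro n hn
    obtain ⟨_, hnn, hd, hlip⟩ := hCSN n hn
    exact grad_sq_le hβ hnn hd hlip (θ n)
  -- trivial case: nonpositive regret
  rcases le_or_gt Lr 0 with hL0 | hL0
  · have h1 : 0 ≤ 8 * K ^ 2 * β * R ^ 2 := by positivity
    have h2 := Real.sqrt_nonneg (8 * K ^ 2 * β * R ^ 2 * N * Ehat)
    linarith
  -- main case
  set M := Lr + (N:ℝ) * Ehat with hM
  have hMpos : 0 < M := by rw [hM]; linarith
  have hSM : S ≤ 2 * β * M := by
    have : (∑ n ∈ Finset.Icc 1 N, f n (θ n)) ≤ M := by rw [hM]; linarith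
    nlinarith
  set u := Real.sqrt (β * M) with hu'
  have hu : 0 < u := Real.sqrt_pos.2 (by positivity)
  have hu2 : u ^ 2 = β * M := Real.sq_sqrt (by positivity)
  set η := R / u with hη'
  have hη : 0 < η := by positivity
  have hmain := (hreg η hη).2
  have e1 : R ^ 2 / η = R * u := by
    rw [hη']; field_simp
  have e2 : η * (β * M) = R * u := by
    rw [hη', ← hu2]; field_simp
  have hLu : Lr ≤ 2 * K * R * u := by
    have h3 : η / 2 * S ≤ η / 2 * (2 * β * M) :=
      mul_le_mul_of_nonneg_left hSM (by positivity)
    have h4 : η / 2 * (2 * β * M) = R * u := by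
      rw [← e2]; ring
    have h5 : K * (R ^ 2 / η + η / 2 * S) ≤ K * (R * u + R * u) := by
      apply mul_le_mul_of_nonneg_left _ hK.le
      rw [e1]; linarith
    calc Lr ≤ K * (R ^ 2 / η + η / 2 * S) := hmain
      _ ≤ K * (R * u + R * u) := h5
      _ = 2 * K * R * u := by ring
  have hq : Lr ^ 2 ≤ 4 * K ^ 2 * β * R ^ 2 * Lr + 4 * K ^ 2 * β * R ^ 2 * ((N:ℝ) * Ehat) := by
    have h6 : Lr * Lr ≤ (2 * K * R * u) * (2 * K * R * u) :=
      mul_le_mul hLu hLu hL0.le (by positivity)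
    have h7 : (2 * K * R * u) * (2 * K * R * u) = 4 * K ^ 2 * R ^ 2 * u ^ 2 := by ring
    rw [h7, hu2, hM] at h6
    nlinarith
  set b := 4 * K ^ 2 * β * R ^ 2 with hb'
  have hb : 0 < b := by positivity
  set s := Real.sqrt (b * ((N:ℝ) * Ehat)) with hs'
  have hs : 0 ≤ s := Real.sqrt_nonneg _
  have hs2 : s ^ 2 = b * ((N:ℝ) * Ehat) := Real.sq_sqrt (by positivity)
  have hfin : Lr ≤ b + s := by
    by_contra hcon
    push_neg at hcon
    have t1 : s * (Lr - b) < Lr * (Lr - b) :=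
      mul_lt_mul_of_pos_right (by linarith) (by linarith)
    have t2 : s * s ≤ s * (Lr - b) :=
      mul_le_mul_of_nonneg_left (by linarith) hs
    nlinarith
  have hcmp : s ≤ Real.sqrt (8 * K ^ 2 * β * R ^ 2 * N * Ehat) := by
    rw [hs']
    apply Real.sqrt_le_sqrt
    rw [hb']
    nlinarith
  have hb8 : b ≤ 8 * K ^ 2 * β * R ^ 2 := by rw [hb']; nlinarith [sq_nonneg K, hβ.le, sq_nonneg R]
  linarith
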